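/- With the setup of a finite probability space of samples (x,y), if ε(p) := E[-log p(y)] denotes the expected log-loss of a predictive distribution p, then the mixture model satisfies ε(p^π) ≤ ∑_{i=0}^K π_i ε(p_{t_i}), where p^π is the softmax of the π-weighted sum of the score functions of p_{t_0},…,p_{t_K}. -/

import Mathlib

open Real Finset

/-- Log-sum-exp convexity: `log ∑ exp` of a convex combination is at most the
convex combination of the `log ∑ exp`'s. Proved via weighted AM-GM (Hölder). -/
lemma lse_convex {ι 𝒴 : Type*} [Fintype ι] [Fintype 𝒴] [Nonempty 𝒴]
    (w : ι → ℝ) (hw : ∀ i, 0 ≤ w i) (hw1 : ∑ i, w i = 1) (a : ι → 𝒴 → ℝ) :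
    Real.log (∑ l, Real.exp (∑ i, w i * a i l)) ≤
      ∑ i, w i * Real.log (∑ l, Real.exp (a i l)) := by
  set S : ι → ℝ := fun i => ∑ l, Real.exp (a i l) with hS
  have hSpos : ∀ i, 0 < S i := fun i =>
    Finset.sum_pos (fun l _ => Real.exp_pos _) Finset.univ_nonempty
  have key : ∑ l, Real.exp (∑ i, w i * a i l) ≤ ∏ i, S i ^ w i := by
    have step : ∀ l : 𝒴, Real.exp (∑ i, w i * a i l) ≤
        (∏ i, S i ^ w i) * ∑ i, w i * (Real.exp (a i l) / S i) := by
      intro l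
      have h1 : Real.exp (∑ i, w i * a i l)
          = ∏ i, (Real.exp (a i l) / S i) ^ w i * S i ^ w i := by
        rw [Real.exp_sum]
        refine Finset.prod_congr rfl fun i _ => ?_
        rw [← Real.mul_rpow (by positivity) (le_of_lt (hSpos i)),
          div_mul_cancel₀ _ (ne_of_gt (hSpos i)),
          Real.rpow_def_of_pos (Real.exp_pos _), Real.log_exp, mul_comm]
      rw [h1, Finset.prod_mul_distrib, mul_comm]
      refine mul_le_mul_of_nonneg_left ?_ (Finset.prod_nonneg fun i _ =>
        Real.rpow_nonneg (le_of_lt (hSpos i)) _)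
      exact Real.geom_mean_le_arith_mean_weighted Finset.univ w _
        (fun i _ => hw i) hw1 (fun i _ => by positivity)
    calc ∑ l, Real.exp (∑ i, w i * a i l)
        ≤ ∑ l, (∏ i, S i ^ w i) * ∑ i, w i * (Real.exp (a i l) / S i) :=
          Finset.sum_le_sum fun l _ => step l
      _ = (∏ i, S i ^ w i) * ∑ l, ∑ i, w i * (Real.exp (a i l) / S i) := by
          rw [Finset.mul_sum]
      _ = ∏ i, S i ^ w i := by
          rw [Finset.sum_comm]
          have : ∀ i : ι, ∑ l, w i * (Real.exp (a i l) / S i) = w i := by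
            intro i
            rw [← Finset.mul_sum, ← Finset.sum_div,
              show (∑ l, Real.exp (a i l)) = S i from rfl,
              div_self (ne_of_gt (hSpos i)), mul_one]
          simp_rw [this, hw1, mul_one]
  calc Real.log (∑ l, Real.exp (∑ i, w i * a i l))
      ≤ Real.log (∏ i, S i ^ w i) := by
        apply Real.log_le_log (Finset.sum_pos (fun l _ => Real.exp_pos _)
          Finset.univ_nonempty) key
    _ = ∑ i, w i * Real.log (S i) := by
        rw [Real.log_prod fun i _ => ne_of_gt (Real.rpow_pos_of_pos (hSpos i) _)]
        exact Finset.sum_congr rfl fun i _ => Real.log_rpow (hSpos i) _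

/-- Theorem 3.2: the expected log-loss of the mixture model is bounded by the
convex combination of the expected log-losses of the individual predictors.
Samples `(x, y)` range over a finite space `Ω` with probability weights `μ`;
`Y ω` is the label of sample `ω` and `s i ω : 𝒴 → ℝ` is the score function of
prompt `i` on sample `ω`. -/
theorem mixture_expected_error_le {Ω 𝒴 : Type*} [Fintype Ω] [Fintype 𝒴] [Nonempty 𝒴]
    (K : ℕ) (μ : Ω → ℝ) (hμ : ∀ ω, 0 ≤ μ ω) (hμ1 : ∑ ω, μ ω = 1)
    (Y : Ω → 𝒴) (s : Fin (K + 1) → Ω → 𝒴 → ℝ) (pw : Fin (K + 1) → ℝ) (τ : ℝ)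
    (hτ : 0 < τ) (hpw : ∀ i, 0 ≤ pw i) (hpw1 : ∑ i, pw i = 1) :
    ∑ ω, μ ω * (-Real.log (Real.exp ((∑ i, pw i * s i ω (Y ω)) / τ) /
        ∑ l', Real.exp ((∑ i, pw i * s i ω l') / τ))) ≤
      ∑ i, pw i * ∑ ω, μ ω * (-Real.log (Real.exp (s i ω (Y ω) / τ) /
        ∑ l', Real.exp (s i ω l' / τ))) := by
  have hZ : ∀ (f : 𝒴 → ℝ), (0 : ℝ) < ∑ l', Real.exp (f l') := fun f =>
    Finset.sum_pos (fun l _ => Real.exp_pos _) Finset.univ_nonempty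
  have hloss : ∀ (f : 𝒴 → ℝ) (y : 𝒴),
      -Real.log (Real.exp (f y) / ∑ l', Real.exp (f l'))
        = Real.log (∑ l', Real.exp (f l')) - f y := by
    intro f y
    rw [Real.log_div (ne_of_gt (Real.exp_pos _)) (ne_of_gt (hZ f)), Real.log_exp]
    ring
  -- pointwise inequality
  have hpoint : ∀ ω, -Real.log (Real.exp ((∑ i, pw i * s i ω (Y ω)) / τ) /
      ∑ l', Real.exp ((∑ i, pw i * s i ω l') / τ)) ≤
      ∑ i, pw i * (-Real.log (Real.exp (s i ω (Y ω) / τ) /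
        ∑ l', Real.exp (s i ω l' / τ))) := by
    intro ω
    have h1 := hloss (fun l' => (∑ i, pw i * s i ω l') / τ) (Y ω)
    have h2 : ∀ i, -Real.log (Real.exp (s i ω (Y ω) / τ) /
        ∑ l', Real.exp (s i ω l' / τ))
          = Real.log (∑ l', Real.exp (s i ω l' / τ)) - s i ω (Y ω) / τ :=
      fun i => hloss (fun l' => s i ω l' / τ) (Y ω)
    rw [h1]
    simp_rw [h2, mul_sub]
    rw [Finset.sum_sub_distrib]
    have hA : ∀ l', (∑ i, pw i * s i ω l') / τ = ∑ i, pw i * (s i ω l' / τ) := by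
      intro l'
      rw [Finset.sum_div]
      exact Finset.sum_congr rfl fun i _ => mul_div_assoc _ _ _
    simp_rw [hA]
    have hlse := lse_convex pw hpw hpw1 (fun i l => s i ω l / τ)
    linarith
  calc ∑ ω, μ ω * (-Real.log (Real.exp ((∑ i, pw i * s i ω (Y ω)) / τ) /
        ∑ l', Real.exp ((∑ i, pw i * s i ω l') / τ)))
      ≤ ∑ ω, μ ω * ∑ i, pw i * (-Real.log (Real.exp (s i ω (Y ω) / τ) /
        ∑ l', Real.exp (s i ω l' / τ))) :=
        Finset.sum_le_sum fun ω _ => mul_le_mul_of_nonneg_left (hpoint ω) (hμ ω)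
    _ = ∑ i, pw i * ∑ ω, μ ω * (-Real.log (Real.exp (s i ω (Y ω) / τ) /
        ∑ l', Real.exp (s i ω l' / τ))) := by
        simp_rw [Finset.mul_sum]
        rw [Finset.sum_comm]
        refine Finset.sum_congr rfl fun i _ => Finset.sum_congr rfl fun ω _ => by ring
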